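/- In a quasi Gelfand triple (H₊, H₀, H₋), the intersection D₊ ∩ D₋ is dense in H₀. -/

import Mathlib

open Filter Topology
open scoped ComplexInnerProductSpace

noncomputable section

/-- Von Neumann-style decomposition for a closed densely defined operator. -/
theorem qgt_decomp {Hp H₀ : Type*}
    [NormedAddCommGroup Hp] [InnerProductSpace ℂ Hp] [CompleteSpace Hp]
    [NormedAddCommGroup H₀] [InnerProductSpace ℂ H₀] [CompleteSpace H₀]
    (T : Hp →ₗ.[ℂ] H₀)
    (hc : IsClosed {p : Hp × H₀ | ∃ f : T.domain, (f : Hp) = p.1 ∧ T f = p.2})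
    (u : H₀) :
    ∃ (b : H₀) (f₀ : T.domain),
      (∀ f : T.domain, ⟪b, T f⟫ = ⟪(f₀ : Hp), (f : Hp)⟫) ∧ b + T f₀ = u := by
  classical
  set e := WithLp.prodContinuousLinearEquiv 2 ℂ Hp H₀ with he
  set Γ : Submodule ℂ (WithLp 2 (Hp × H₀)) :=
    T.graph.comap e.toLinearEquiv.toLinearMap with hΓ
  have hΓset : (Γ : Set (WithLp 2 (Hp × H₀)))
      = ⇑e ⁻¹' {p : Hp × H₀ | ∃ f : T.domain, (f : Hp) = p.1 ∧ T f = p.2} := by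
    ext x
    simp [hΓ, Submodule.mem_comap, LinearPMap.mem_graph_iff]
  have hclosed' : IsClosed (Γ : Set (WithLp 2 (Hp × H₀))) := by
    rw [hΓset]; exact hc.preimage e.continuous
  haveI : CompleteSpace Γ := hclosed'.completeSpace_coe
  obtain ⟨y, hy, z, hz, hsum⟩ := Γ.exists_add_mem_mem_orthogonal (e.symm (0, u))
  have hy' : e y ∈ T.graph := hy
  obtain ⟨f₀, hf₁, hf₂⟩ := T.mem_graph_iff.mp hy'
  have hez : e z = (0, u) - e y := by
    have := congrArg e hsum
    rw [e.apply_symm_apply, map_add] at this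
    rw [this]; abel
  have hz1 : (e z).1 = -(f₀ : Hp) := by rw [hez]; simp [hf₁]
  have hz2 : (e z).2 = u - T f₀ := by rw [hez]; simp [hf₂]
  refine ⟨u - T f₀, f₀, ?_, by abel⟩
  intro f
  have hmem : e.symm ((f : Hp), T f) ∈ Γ := by
    show e (e.symm _) ∈ T.graph
    rw [e.apply_symm_apply]
    exact T.mem_graph f
  have horth := (Submodule.mem_orthogonal Γ z).mp hz _ hmem
  rw [WithLp.prod_inner_apply] at horth
  have hfst : (e.symm ((f : Hp), T f)).ofLp.1 = (f : Hp) := rfl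
  have hsnd : (e.symm ((f : Hp), T f)).ofLp.2 = T f := rfl
  have hzf : z.ofLp.1 = (e z).1 := rfl
  have hzs : z.ofLp.2 = (e z).2 := rfl
  rw [hfst, hsnd, hzf, hzs, hz1, hz2] at horth
  have : ⟪T f, u - T f₀⟫ = ⟪(f : Hp), (f₀ : Hp)⟫ := by
    rw [inner_neg_right] at horth
    linear_combination horth
  calc ⟪u - T f₀, T f⟫ = (starRingEnd ℂ) ⟪T f, u - T f₀⟫ := (inner_conj_symm _ _).symm
    _ = (starRingEnd ℂ) ⟪(f : Hp), (f₀ : Hp)⟫ := by rw [this]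
    _ = ⟪(f₀ : Hp), (f : Hp)⟫ := inner_conj_symm _ _


/-- A quasi Gelfand triple `(H₊, H₀, H₋)`, encoded by the two embeddings
`ι₊ : D₊ ⊆ H₊ → H₀` and `ι₋ : D₋ ⊆ H₋ → H₀`: both are injective, closed, densely defined
with dense ranges, and the `H₋`-norm of an element of `D₋` equals the `H₊`-norm of its image
under the adjoint `ι₊*` (which exactly says that `H₋` completes `D₋` under
`‖g‖₋ = sup_{f ∈ D₊} |⟨g, f⟩₀|/‖f‖₊`); moreover `ran ι₋` is all of `dom ι₊*`. -/
structure QuasiGelfandTriple (Hp H₀ Hm : Type*)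
    [NormedAddCommGroup Hp] [InnerProductSpace ℂ Hp] [CompleteSpace Hp]
    [NormedAddCommGroup H₀] [InnerProductSpace ℂ H₀] [CompleteSpace H₀]
    [NormedAddCommGroup Hm] [InnerProductSpace ℂ Hm] [CompleteSpace Hm] where
  ip : Hp →ₗ.[ℂ] H₀
  im : Hm →ₗ.[ℂ] H₀
  ip_dense_dom : Dense (ip.domain : Set Hp)
  im_dense_dom : Dense (im.domain : Set Hm)
  ip_closed : IsClosed {p : Hp × H₀ | ∃ f : ip.domain, (f : Hp) = p.1 ∧ ip f = p.2}
  im_closed : IsClosed {p : Hm × H₀ | ∃ g : im.domain, (g : Hm) = p.1 ∧ im g = p.2}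
  ip_injective : ∀ f : ip.domain, ip f = 0 → (f : Hp) = 0
  im_injective : ∀ g : im.domain, im g = 0 → (g : Hm) = 0
  ip_dense_ran : Dense (Set.range fun f : ip.domain => ip f)
  im_dense_ran : Dense (Set.range fun g : im.domain => im g)
  riesz : ∀ g : im.domain, ∃ v : Hp,
    (∀ f : ip.domain, ⟪im g, ip f⟫ = ⟪v, (f : Hp)⟫) ∧ ‖v‖ = ‖(g : Hm)‖
  ran_im : ∀ (u : H₀) (v : Hp),
    (∀ f : ip.domain, ⟪u, ip f⟫ = ⟪v, (f : Hp)⟫) → ∃ g : im.domain, im g = u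

/-- In a quasi Gelfand triple `(H₊, H₀, H₋)`, the intersection
`D₊ ∩ D₋` is dense in the pivot space `H₀`. -/
theorem stmt12 {Hp H₀ Hm : Type*}
    [NormedAddCommGroup Hp] [InnerProductSpace ℂ Hp] [CompleteSpace Hp]
    [NormedAddCommGroup H₀] [InnerProductSpace ℂ H₀] [CompleteSpace H₀]
    [NormedAddCommGroup Hm] [InnerProductSpace ℂ Hm] [CompleteSpace Hm]
    (Q : QuasiGelfandTriple Hp H₀ Hm) :
    Dense {u : H₀ | (∃ f : Q.ip.domain, Q.ip f = u) ∧ ∃ g : Q.im.domain, Q.im g = u} := by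
  classical
  set T := Q.ip with hT
  -- the target set as a submodule
  set SM : Submodule ℂ H₀ :=
    { carrier := {u : H₀ | (∃ f : T.domain, T f = u) ∧ ∃ g : Q.im.domain, Q.im g = u}
      add_mem' := by
        rintro a b ⟨⟨fa, hfa⟩, ⟨ga, hga⟩⟩ ⟨⟨fb, hfb⟩, ⟨gb, hgb⟩⟩
        exact ⟨⟨fa + fb, by rw [T.map_add, hfa, hfb]⟩,
               ⟨ga + gb, by rw [Q.im.map_add, hga, hgb]⟩⟩
      zero_mem' := ⟨⟨0, T.map_zero⟩, ⟨0, Q.im.map_zero⟩⟩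
      smul_mem' := by
        rintro c a ⟨⟨fa, hfa⟩, ⟨ga, hga⟩⟩
        exact ⟨⟨c • fa, by rw [T.map_smul, hfa]⟩,
               ⟨c • ga, by rw [Q.im.map_smul, hga]⟩⟩ } with hSM
  suffices h : Dense (SM : Set H₀) by exact h
  rw [Submodule.dense_iff_topologicalClosure_eq_top,
    Submodule.topologicalClosure_eq_top_iff]
  rw [Submodule.eq_bot_iff]
  intro w hw
  have hw' : ∀ u ∈ SM, ⟪u, w⟫ = 0 := (Submodule.mem_orthogonal SM w).mp hw
  obtain ⟨b₁, g₁, h₁, hw1⟩ := qgt_decomp T Q.ip_closed w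
  obtain ⟨b₂, g₂, h₂, hb1⟩ := qgt_decomp T Q.ip_closed b₁
  -- T g₂ = b₁ - b₂ belongs to the target set
  have hTg₂ : T g₂ = b₁ - b₂ := by rw [← hb1]; abel
  have hadj : ∀ f : T.domain, ⟪T g₂, T f⟫ = ⟪((g₁ : Hp) - (g₂ : Hp)), (f : Hp)⟫ := by
    intro f
    rw [hTg₂, inner_sub_left, inner_sub_left, h₁ f, h₂ f]
  have hmem : T g₂ ∈ SM := by
    refine ⟨⟨g₂, rfl⟩, ?_⟩
    exact Q.ran_im (T g₂) ((g₁ : Hp) - (g₂ : Hp)) hadj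
  have h0 : ⟪T g₂, w⟫ = 0 := hw' _ hmem
  -- compute ⟪T g₂, w⟫ = ‖g₁‖²
  have hcomp : ⟪T g₂, w⟫ = ⟪(g₁ : Hp), (g₁ : Hp)⟫ := by
    have e1 : ⟪T g₂, b₁⟫ = ⟪(g₂ : Hp), (g₁ : Hp)⟫ := by
      rw [← inner_conj_symm, h₁ g₂, inner_conj_symm]
    have e2 : ⟪T g₂, T g₁⟫ = ⟪(g₁ : Hp), (g₁ : Hp)⟫ - ⟪(g₂ : Hp), (g₁ : Hp)⟫ := by
      rw [hTg₂, inner_sub_left, h₁ g₁, h₂ g₁]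
    rw [← hw1, inner_add_right, e1, e2]
    ring
  have hg₁0 : (g₁ : Hp) = 0 := by
    have : ⟪(g₁ : Hp), (g₁ : Hp)⟫ = 0 := by rw [← hcomp, h0]
    exact inner_self_eq_zero.mp this
  have hg₁z : g₁ = 0 := Subtype.ext hg₁0
  have hwb : w = b₁ := by rw [← hw1, hg₁z, T.map_zero, add_zero]
  -- so w is orthogonal to the dense range of T
  have horth : ∀ f : T.domain, ⟪T f, w⟫ = 0 := by
    intro f
    rw [← inner_conj_symm, hwb, h₁ f, hg₁z]
    simp
  have hall : ∀ u : H₀, ⟪u, w⟫ = 0 := by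
    have hcl : IsClosed {u : H₀ | ⟪u, w⟫ = 0} :=
      isClosed_eq (Continuous.inner continuous_id continuous_const) continuous_const
    have hsub : Set.range (fun f : T.domain => T f) ⊆ {u : H₀ | ⟪u, w⟫ = 0} := by
      rintro _ ⟨f, rfl⟩; exact horth f
    have := hcl.closure_subset_iff.mpr hsub
    intro u
    exact this (by rw [Q.ip_dense_ran.closure_eq]; trivial)
  exact inner_self_eq_zero.mp (hall w)
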